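/- Let G = (V,E) with n = |V|. The greedy smallest-last ordering produces an ordering whose value of ∑_{v∈V} ⃖d(v)² is at most 4·H_n times the minimum over all orderings, where H_n = ∑_{i=1}^n 1/i is the n-th harmonic number. -/

import Mathlib

open Finset

/-- A finite loop-free multigraph: edges indexed by `E`, each with two distinct endpoints. -/
structure Multigraph (V E : Type) where
  fst : E → V
  snd : E → V
  loopless : ∀ e, fst e ≠ snd e

namespace Multigraph

variable {V E : Type} [Fintype V] [DecidableEq V] [Fintype E] [DecidableEq E]

/-- Head of edge `e` under orientation `o`. -/
def head (G : Multigraph V E) (o : E → Bool) (e : E) : V :=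
  if o e then G.fst e else G.snd e

/-- Tail of edge `e` under orientation `o`. -/
def tail (G : Multigraph V E) (o : E → Bool) (e : E) : V :=
  if o e then G.snd e else G.fst e

/-- Indegree of `v` under orientation `o`. -/
def indeg (G : Multigraph V E) (o : E → Bool) (v : V) : ℕ :=
  (Finset.univ.filter (fun e => G.head o e = v)).card

/-- The orientation `o` contains a directed cycle (a closed directed trail). -/
def HasDicycle (G : Multigraph V E) (o : E → Bool) : Prop :=
  ∃ k : ℕ, ∃ hk : 0 < k, ∃ f : Fin k → E, Function.Injective f ∧
    ∀ i : Fin k, G.head o (f i) = G.tail o (f ⟨(i.val + 1) % k, Nat.mod_lt _ hk⟩)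

/-- The orientation `o` is acyclic. -/
def Acyclic (G : Multigraph V E) (o : E → Bool) : Prop := ¬ G.HasDicycle o

/-- Left-degree of `v` in the vertex ordering `σ`. -/
def leftDeg (G : Multigraph V E) (σ : V ≃ Fin (Fintype.card V)) (v : V) : ℕ :=
  (Finset.univ.filter (fun e =>
    (G.fst e = v ∧ σ (G.snd e) < σ v) ∨ (G.snd e = v ∧ σ (G.fst e) < σ v))).card

/-- Right-degree of `v` in the vertex ordering `σ`. -/
def rightDeg (G : Multigraph V E) (σ : V ≃ Fin (Fintype.card V)) (v : V) : ℕ :=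
  (Finset.univ.filter (fun e =>
    (G.fst e = v ∧ σ v < σ (G.snd e)) ∨ (G.snd e = v ∧ σ v < σ (G.fst e)))).card

/-- Degree of `v` in the subgraph induced by `S`. -/
def degIn (G : Multigraph V E) (S : Finset V) (v : V) : ℕ :=
  (Finset.univ.filter (fun e =>
    (G.fst e = v ∨ G.snd e = v) ∧ G.fst e ∈ S ∧ G.snd e ∈ S)).card

/-- Degree of `v` in `G`. -/
def deg (G : Multigraph V E) (v : V) : ℕ :=
  (Finset.univ.filter (fun e => G.fst e = v ∨ G.snd e = v)).card

/-- The set of vertices appearing at or before `v` in the ordering `σ`. -/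
def prefixSet (σ : V ≃ Fin (Fintype.card V)) (v : V) : Finset V :=
  Finset.univ.filter (fun u => σ u ≤ σ v)

end Multigraph

open Multigraph

variable {V E : Type} [Fintype V] [DecidableEq V] [Fintype E] [DecidableEq E]

set_option linter.unusedSectionVars false

def edgesIn (G : Multigraph V E) (S : Finset V) : Finset E :=
  Finset.univ.filter (fun e => G.fst e ∈ S ∧ G.snd e ∈ S)

lemma mem_prefixSet {σ : V ≃ Fin (Fintype.card V)} {v u : V} :
    u ∈ prefixSet σ v ↔ σ u ≤ σ v := by simp [prefixSet]

lemma leftDeg_eq_degIn (G : Multigraph V E) (σ : V ≃ Fin (Fintype.card V)) (v : V) :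
    G.leftDeg σ v = G.degIn (prefixSet σ v) v := by
  unfold Multigraph.leftDeg Multigraph.degIn
  congr 1
  apply Finset.filter_congr
  intro e _
  simp only [mem_prefixSet]
  have hne := G.loopless e
  constructor
  · rintro (⟨h1, h2⟩ | ⟨h1, h2⟩)
    · exact ⟨Or.inl h1, by rw [h1], le_of_lt h2⟩
    · exact ⟨Or.inr h1, le_of_lt h2, by rw [h1]⟩
  · rintro ⟨h1 | h1, h2, h3⟩
    · refine Or.inl ⟨h1, lt_of_le_of_ne h3 ?_⟩
      intro h; exact hne (h1.trans (σ.injective h).symm)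
    · refine Or.inr ⟨h1, lt_of_le_of_ne h2 ?_⟩
      intro h; exact hne ((σ.injective h).trans h1.symm)

lemma card_prefixSet (σ : V ≃ Fin (Fintype.card V)) (v : V) :
    (prefixSet σ v).card = (σ v : ℕ) + 1 := by
  rw [← Fin.card_Iic (σ v)]
  apply Finset.card_bij (fun u _ => σ u)
  · intro u hu; exact Finset.mem_Iic.mpr (mem_prefixSet.mp hu)
  · intro a _ b _ h; exact σ.injective h
  · intro j hj
    exact ⟨σ.symm j, mem_prefixSet.mpr (by simpa using Finset.mem_Iic.mp hj), by simp⟩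

lemma handshake (G : Multigraph V E) (S : Finset V) :
    ∑ u ∈ S, G.degIn S u = 2 * (edgesIn G S).card := by
  unfold Multigraph.degIn
  simp_rw [Finset.card_filter]
  rw [Finset.sum_comm]
  have h1 : ∀ e : E,
      (∑ u ∈ S, if (G.fst e = u ∨ G.snd e = u) ∧ G.fst e ∈ S ∧ G.snd e ∈ S then 1 else 0)
      = if G.fst e ∈ S ∧ G.snd e ∈ S then 2 else 0 := by
    intro e
    by_cases h : G.fst e ∈ S ∧ G.snd e ∈ S
    · simp only [h, and_true, if_true]
      rw [← Finset.card_filter]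
      have : S.filter (fun u => G.fst e = u ∨ G.snd e = u) = {G.fst e, G.snd e} := by
        ext u
        simp only [Finset.mem_filter, Finset.mem_insert, Finset.mem_singleton]
        constructor
        · rintro ⟨_, h1 | h1⟩
          · exact Or.inl h1.symm
          · exact Or.inr h1.symm
        · rintro (rfl | rfl)
          · exact ⟨h.1, Or.inl rfl⟩
          · exact ⟨h.2, Or.inr rfl⟩
      rw [this, Finset.card_pair (G.loopless e)]
    · simp only [h, and_false, if_false, Finset.sum_const_zero]
  rw [Finset.sum_congr rfl (fun e _ => h1 e)]
  rw [← Finset.sum_filter]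
  rw [Finset.sum_const, smul_eq_mul, mul_comm]
  rfl

lemma greedy_key (G : Multigraph V E) (σ : V ≃ Fin (Fintype.card V))
    (hgreedy : ∀ v u : V, σ u ≤ σ v →
      G.degIn (Multigraph.prefixSet σ v) v ≤ G.degIn (Multigraph.prefixSet σ v) u) (v : V) :
    (prefixSet σ v).card * G.leftDeg σ v ≤ 2 * (edgesIn G (prefixSet σ v)).card := by
  calc (prefixSet σ v).card * G.leftDeg σ v = ∑ _u ∈ prefixSet σ v, G.leftDeg σ v := by
        rw [Finset.sum_const, smul_eq_mul]
    _ ≤ ∑ u ∈ prefixSet σ v, G.degIn (prefixSet σ v) u := by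
        apply Finset.sum_le_sum; intro u hu
        rw [leftDeg_eq_degIn]
        exact hgreedy v u (mem_prefixSet.mp hu)
    _ = 2 * (edgesIn G (prefixSet σ v)).card := handshake G _

lemma later_count (G : Multigraph V E) (σ' : V ≃ Fin (Fintype.card V)) (S : Finset V) :
    ∑ u ∈ S, (Finset.univ.filter (fun e => (G.fst e ∈ S ∧ G.snd e ∈ S) ∧
      ((G.fst e = u ∧ σ' (G.snd e) < σ' u) ∨ (G.snd e = u ∧ σ' (G.fst e) < σ' u)))).card
      = (edgesIn G S).card := by
  simp_rw [Finset.card_filter]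
  rw [Finset.sum_comm]
  have h1 : ∀ e : E,
      (∑ u ∈ S, if (G.fst e ∈ S ∧ G.snd e ∈ S) ∧
        ((G.fst e = u ∧ σ' (G.snd e) < σ' u) ∨ (G.snd e = u ∧ σ' (G.fst e) < σ' u)) then 1 else 0)
      = if G.fst e ∈ S ∧ G.snd e ∈ S then 1 else 0 := by
    intro e
    by_cases h : G.fst e ∈ S ∧ G.snd e ∈ S
    · simp only [h, true_and, if_true]
      rw [← Finset.card_filter]
      have hne : σ' (G.fst e) ≠ σ' (G.snd e) := fun hc => G.loopless e (σ'.injective hc)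
      rcases hne.lt_or_gt with hlt | hlt
      · have : S.filter (fun u => (G.fst e = u ∧ σ' (G.snd e) < σ' u) ∨
            (G.snd e = u ∧ σ' (G.fst e) < σ' u)) = {G.snd e} := by
          ext u
          simp only [Finset.mem_filter, Finset.mem_singleton]
          constructor
          · rintro ⟨_, ⟨rfl, h2⟩ | ⟨rfl, _⟩⟩
            · exact absurd (hlt.trans h2) (lt_irrefl _)
            · rfl
          · rintro rfl; exact ⟨h.2, Or.inr ⟨rfl, hlt⟩⟩
        rw [this, Finset.card_singleton]
      · have : S.filter (fun u => (G.fst e = u ∧ σ' (G.snd e) < σ' u) ∨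
            (G.snd e = u ∧ σ' (G.fst e) < σ' u)) = {G.fst e} := by
          ext u
          simp only [Finset.mem_filter, Finset.mem_singleton]
          constructor
          · rintro ⟨_, ⟨rfl, _⟩ | ⟨rfl, h2⟩⟩
            · rfl
            · exact absurd (hlt.trans h2) (lt_irrefl _)
          · rintro rfl; exact ⟨h.1, Or.inl ⟨rfl, hlt⟩⟩
        rw [this, Finset.card_singleton]
    · simp only [h, false_and, if_false, Finset.sum_const_zero]
  rw [Finset.sum_congr rfl (fun e _ => h1 e)]
  rw [← Finset.sum_filter]
  simp [edgesIn]

lemma lower_bound (G : Multigraph V E) (σ' : V ≃ Fin (Fintype.card V)) (S : Finset V) :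
    (((edgesIn G S).card : ℝ))^2 ≤ (S.card : ℝ) * ∑ v : V, ((G.leftDeg σ' v : ℝ))^2 := by
  set f : V → ℕ := fun u => (Finset.univ.filter (fun e => (G.fst e ∈ S ∧ G.snd e ∈ S) ∧
      ((G.fst e = u ∧ σ' (G.snd e) < σ' u) ∨ (G.snd e = u ∧ σ' (G.fst e) < σ' u)))).card with hf
  have hfle : ∀ u, f u ≤ G.leftDeg σ' u := by
    intro u
    apply Finset.card_le_card
    intro e he
    rw [Finset.mem_filter] at he ⊢
    exact ⟨he.1, he.2.2⟩
  calc (((edgesIn G S).card : ℝ))^2 = (∑ u ∈ S, (f u : ℝ))^2 := by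
        rw [← Nat.cast_sum, later_count G σ' S]
    _ ≤ (S.card : ℝ) * ∑ u ∈ S, (f u : ℝ)^2 := by
        exact_mod_cast sq_sum_le_card_mul_sum_sq (s := S) (f := fun u => (f u : ℝ))
    _ ≤ (S.card : ℝ) * ∑ v : V, ((G.leftDeg σ' v : ℝ))^2 := by
        apply mul_le_mul_of_nonneg_left _ (by positivity)
        apply le_trans (Finset.sum_le_sum (fun u _ => ?_))
          (Finset.sum_le_sum_of_subset_of_nonneg (Finset.subset_univ S) (fun _ _ _ => by positivity))
        have := hfle u
        have : (f u : ℝ) ≤ (G.leftDeg σ' u : ℝ) := by exact_mod_cast this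
        nlinarith [Nat.cast_nonneg (α := ℝ) (f u)]

/-- The greedy smallest-last ordering is a `4·H_n`-approximation for minimizing
the square-sum of left-degrees. -/
theorem greedy_harmonic_approx (G : Multigraph V E)
    (σ : V ≃ Fin (Fintype.card V))
    (hgreedy : ∀ v u : V, σ u ≤ σ v →
      G.degIn (Multigraph.prefixSet σ v) v ≤ G.degIn (Multigraph.prefixSet σ v) u) :
    ∀ σ' : V ≃ Fin (Fintype.card V),
      (∑ v : V, ((G.leftDeg σ v : ℝ)) ^ 2) ≤
        4 * (∑ i ∈ Finset.range (Fintype.card V), (1 : ℝ) / (i + 1)) *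
          ∑ v : V, ((G.leftDeg σ' v : ℝ)) ^ 2 := by
  
  intro σ'
  set A : ℝ := ∑ v : V, ((G.leftDeg σ' v : ℝ)) ^ 2 with hA
  have hA0 : 0 ≤ A := by positivity
  have key : ∀ v : V, ((G.leftDeg σ v : ℝ)) ^ 2 ≤ 4 * (1 / (((σ v : ℕ) : ℝ) + 1)) * A := by
    intro v
    set k : ℝ := ((σ v : ℕ) : ℝ) + 1 with hk
    have hkpos : 0 < k := by positivity
    have h1 : k * (G.leftDeg σ v : ℝ) ≤ 2 * ((edgesIn G (prefixSet σ v)).card : ℝ) := by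
      have h := greedy_key G σ hgreedy v
      rw [card_prefixSet] at h
      have h' := (Nat.cast_le (α := ℝ)).mpr h
      push_cast at h'
      rw [hk]
      linarith
    have h2 : ((edgesIn G (prefixSet σ v)).card : ℝ)^2 ≤ k * A := by
      have h := lower_bound G σ' (prefixSet σ v)
      rwa [card_prefixSet, Nat.cast_add, Nat.cast_one] at h
    have hd0 : (0:ℝ) ≤ (G.leftDeg σ v : ℝ) := Nat.cast_nonneg _
    have hm0 : (0:ℝ) ≤ ((edgesIn G (prefixSet σ v)).card : ℝ) := Nat.cast_nonneg _
    rw [show 4 * (1/k) * A = (4 * A)/k by ring, le_div_iff₀ hkpos]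
    nlinarith [mul_le_mul h1 h1 (by positivity) (by positivity), hkpos]
  calc ∑ v : V, ((G.leftDeg σ v : ℝ)) ^ 2
      ≤ ∑ v : V, 4 * (1 / (((σ v : ℕ) : ℝ) + 1)) * A :=
        Finset.sum_le_sum (fun v _ => key v)
    _ = 4 * (∑ v : V, 1 / (((σ v : ℕ) : ℝ) + 1)) * A := by
        rw [mul_assoc, Finset.sum_mul, Finset.mul_sum]
        exact Finset.sum_congr rfl (fun v _ => by ring)
    _ = 4 * (∑ i ∈ Finset.range (Fintype.card V), (1 : ℝ) / (i + 1)) * A := by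
        congr 1
        congr 1
        rw [← Fin.sum_univ_eq_sum_range (fun i => (1:ℝ)/(i+1)) (Fintype.card V)]
        exact Equiv.sum_comp σ (fun i : Fin (Fintype.card V) => (1:ℝ)/((i:ℕ)+1))
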